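/- arXiv:2402.03352 — 6 statements merged into one kernel-verified Lean document; each statement's English description precedes it below -/
import Mathlib

section
/- Suppose Λ = {λ ∈ ℝ^p : λ ≥ 0}, γ > 0, λ ∈ Λ, and v ∈ ℝ^p. If (1/γ)‖λ − P_Λ(λ + γ v)‖ ≤ ε, then for every index i, max{0, v_i} ≤ ε. -/
lemma coord_le_norm {p : ℕ} (x : EuclideanSpace ℝ (Fin p)) (i : Fin p) :
    |x i| ≤ ‖x‖ := by
  rw [EuclideanSpace.norm_eq]
  have : |x i| = Real.sqrt (‖x i‖ ^ 2) := by
    rw [Real.sqrt_sq_eq_abs, Real.norm_eq_abs, abs_abs]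
  rw [this]
  apply Real.sqrt_le_sqrt
  exact Finset.single_le_sum (f := fun j => ‖x j‖ ^ 2)
    (fun j _ => by positivity) (Finset.mem_univ i)

theorem stmt_2 (p : ℕ) (γ ε : ℝ) (hγ : 0 < γ)
    (lam v : EuclideanSpace ℝ (Fin p))
    (hlam : ∀ i, 0 ≤ lam i)
    (h : (1/γ) * ‖lam - (WithLp.equiv 2 (Fin p → ℝ)).symm
          (fun i => max 0 ((lam + γ • v) i))‖ ≤ ε) :
    ∀ i, max 0 (v i) ≤ ε := by
  intro i
  have hε : 0 ≤ ε := le_trans (by positivity) h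
  rcases le_or_gt (v i) 0 with hv | hv
  · simpa [max_eq_left hv] using hε
  · have hcoord : |lam i - max 0 ((lam + γ • v) i)| ≤ γ * ε := by
      have := coord_le_norm (lam - (WithLp.equiv 2 (Fin p → ℝ)).symm
          (fun i => max 0 ((lam + γ • v) i))) i
      have h2 : ‖lam - (WithLp.equiv 2 (Fin p → ℝ)).symm
          (fun i => max 0 ((lam + γ • v) i))‖ ≤ γ * ε := by
        rw [one_div] at h
        calc _ = γ * (γ⁻¹ * ‖lam - (WithLp.equiv 2 (Fin p → ℝ)).symm
              (fun i => max 0 ((lam + γ • v) i))‖) := by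
              field_simp
          _ ≤ γ * ε := by
              exact mul_le_mul_of_nonneg_left h hγ.le
      refine le_trans ?_ h2
      simpa using this
    have hmax : max 0 ((lam + γ • v) i) = lam i + γ * v i := by
      have : (lam + γ • v) i = lam i + γ * v i := rfl
      rw [this, max_eq_right]
      have : 0 ≤ γ * v i := le_of_lt (mul_pos hγ hv)
      linarith [hlam i]
    rw [hmax] at hcoord
    have : |lam i - (lam i + γ * v i)| = γ * v i := by
      rw [abs_of_nonpos (by nlinarith)]; ring
    rw [this] at hcoord
    have : v i ≤ ε := by
      by_contra hc
      push_neg at hc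
      nlinarith
    simpa [max_eq_right hv.le] using this
end

section
/- Let φ : Y → ℝ be μ-strongly convex and L-smooth on a convex compact set Y, and let y* = argmin_{y∈Y} φ(y). Define the projected-gradient residual G_β(y) = y − P_Y(y − (1/β)∇φ(y)) for β > 0. Then ‖y − y*‖ ≤ ((2β+μ)(β+L)/(μβ)) ‖G_β(y)‖ for all y ∈ Y. -/
open Set Filter

local notation "⟪" x ", " y "⟫" => @inner ℝ _ _ x y

/-- If `h` has derivative `d` at `0` and `h t ≤ h 0 + t * c` on `(0,1]`, then `d ≤ c`. -/
lemma slope_le_aux {h : ℝ → ℝ} {d c : ℝ} (hd : HasDerivAt h d 0)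
    (hc : ∀ t ∈ Set.Ioc (0:ℝ) 1, h t ≤ h 0 + t * c) : d ≤ c := by
  rw [hasDerivAt_iff_tendsto_slope] at hd
  have h2 : Tendsto (slope h 0) (nhdsWithin (0:ℝ) (Set.Ioi 0)) (nhds d) :=
    hd.mono_left (nhdsWithin_mono 0 (fun t ht => ne_of_gt ht))
  refine le_of_tendsto h2 ?_
  filter_upwards [Ioc_mem_nhdsGT_of_mem (Set.left_mem_Ico.2 one_pos)] with t ht
  have ht0 : (0:ℝ) < t := ht.1
  have := hc t ht
  rw [slope_def_field]
  rw [div_le_iff₀ (by linarith [sub_zero t] : (0:ℝ) < t - 0)]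
  nlinarith [hc t ht]

/-- first-order inequality for a convex differentiable function. -/
lemma convex_grad_ineq {E : Type*} [NormedAddCommGroup E] [InnerProductSpace ℝ E]
    {Y : Set E} {f : E → ℝ} {f' : E →L[ℝ] ℝ} {x z : E}
    (hf : ConvexOn ℝ Y f) (hx : x ∈ Y) (hz : z ∈ Y) (hd : HasFDerivAt f f' x) :
    f' (z - x) ≤ f z - f x := by
  have hline : HasDerivAt (fun t : ℝ => x + t • (z - x)) (z - x) 0 := by
    simpa using ((hasDerivAt_id (0:ℝ)).smul_const (z - x)).const_add x
  have hcomp : HasDerivAt (fun t : ℝ => f (x + t • (z - x))) (f' (z - x)) 0 := by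
    exact hd.comp_hasDerivAt_of_eq 0 hline (by simp)
  have h0 : f (x + (0:ℝ) • (z - x)) = f x := by simp
  have := slope_le_aux hcomp (c := f z - f x) ?_
  · simpa [h0] using this
  · intro t ht
    have key := hf.2 hx hz (show (0:ℝ) ≤ 1 - t by linarith [ht.2]) (le_of_lt ht.1) (show (1:ℝ) - t + t = 1 by ring)
    have heq : (1 - t) • x + t • z = x + t • (z - x) := by module
    rw [heq] at key
    simp only [smul_eq_mul] at key
    rw [h0]
    nlinarith [key]

lemma strong_grad_ineq {E : Type*} [NormedAddCommGroup E] [InnerProductSpace ℝ E]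
    [CompleteSpace E] {Y : Set E} {f : E → ℝ} {μ : ℝ} {x z : E}
    (hsc : StrongConvexOn Y μ f) (hdiff : Differentiable ℝ f) (hx : x ∈ Y) (hz : z ∈ Y) :
    f x + ⟪gradient f x, z - x⟫ + μ/2 * ‖z - x‖^2 ≤ f z := by
  have hg : ConvexOn ℝ Y (fun w => f w - μ / 2 * ‖w‖ ^ 2) := strongConvexOn_iff_convex.mp hsc
  have h1 : HasFDerivAt f (InnerProductSpace.toDual ℝ E (gradient f x) : E →L[ℝ] ℝ) x :=
    hasGradientAt_iff_hasFDerivAt.mp (hdiff x).hasGradientAt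
  have h2 : HasFDerivAt (fun w : E => (⟪w, w⟫ : ℝ))
      ((fderivInnerCLM ℝ (x, x)).comp
        ((ContinuousLinearMap.id ℝ E).prod (ContinuousLinearMap.id ℝ E))) x :=
    (hasFDerivAt_id x).inner ℝ (hasFDerivAt_id x)
  have h2' : HasFDerivAt (fun w : E => μ/2 * ‖w‖^2)
      ((μ/2) • ((fderivInnerCLM ℝ (x, x)).comp
        ((ContinuousLinearMap.id ℝ E).prod (ContinuousLinearMap.id ℝ E)))) x := by
    simpa only [real_inner_self_eq_norm_sq] using h2.const_mul (μ/2)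
  have h3 := h1.sub h2'
  have h4 := convex_grad_ineq hg hx hz h3
  simp only [ContinuousLinearMap.coe_sub', Pi.sub_apply, ContinuousLinearMap.coe_smul',
    Pi.smul_apply, ContinuousLinearMap.coe_comp', Function.comp_apply,
    ContinuousLinearMap.prod_apply, ContinuousLinearMap.coe_id', id_eq,
    fderivInnerCLM_apply, InnerProductSpace.toDual_apply_apply, smul_eq_mul] at h4
  have e1 : (⟪x, z - x⟫ : ℝ) = ⟪x, z⟫ - ‖x‖^2 := by
    rw [inner_sub_right, real_inner_self_eq_norm_sq]
  have e2 : (⟪z - x, x⟫ : ℝ) = ⟪x, z⟫ - ‖x‖^2 := by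
    rw [inner_sub_left, real_inner_self_eq_norm_sq, real_inner_comm]
  have e3 : ‖z - x‖^2 = ‖z‖^2 - 2 * ⟪z, x⟫ + ‖x‖^2 := norm_sub_sq_real z x
  have e4 : (⟪z, x⟫ : ℝ) = ⟪x, z⟫ := real_inner_comm x z
  rw [e1, e2] at h4
  rw [e3, e4]
  linarith

set_option maxHeartbeats 2000000 in
theorem stmt_5 (dy : ℕ) (Y : Set (EuclideanSpace ℝ (Fin dy)))
    (hYcv : Convex ℝ Y) (hYcp : IsCompact Y) (hYne : Y.Nonempty)
    (φ : EuclideanSpace ℝ (Fin dy) → ℝ) (μ L β : ℝ)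
    (hμ : 0 < μ) (hL : 0 < L) (hβ : 0 < β)
    (hsc : StrongConvexOn Y μ φ)
    (hdiff : Differentiable ℝ φ)
    (hlip : ∀ y z, ‖gradient φ y - gradient φ z‖ ≤ L * ‖y - z‖)
    (ystar : EuclideanSpace ℝ (Fin dy)) (hystarY : ystar ∈ Y)
    (hmin : ∀ y ∈ Y, φ ystar ≤ φ y)
    (y : EuclideanSpace ℝ (Fin dy)) (hy : y ∈ Y)
    (py : EuclideanSpace ℝ (Fin dy)) (hpyY : py ∈ Y)
    (hproj : ∀ z ∈ Y, ‖(y - (1/β) • gradient φ y) - py‖ ≤ ‖(y - (1/β) • gradient φ y) - z‖) :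
    ‖y - ystar‖ ≤ ((2*β + μ) * (β + L) / (μ * β)) * ‖y - py‖ := by
  set u := y - (1/β) • gradient φ y with hu
  -- projection characterization
  haveI : Nonempty Y := hYne.to_subtype
  have hbdd : BddBelow (Set.range fun w : Y => ‖u - (w : EuclideanSpace ℝ (Fin dy))‖) :=
    ⟨0, by rintro _ ⟨w, rfl⟩; exact norm_nonneg _⟩
  have hinf : ‖u - py‖ = ⨅ w : Y, ‖u - (w : EuclideanSpace ℝ (Fin dy))‖ :=
    le_antisymm (le_ciInf fun w => hproj w w.2) (ciInf_le hbdd ⟨py, hpyY⟩)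
  have hpc : (⟪u - py, ystar - py⟫ : ℝ) ≤ 0 :=
    (norm_eq_iInf_iff_real_inner_le_zero hYcv hpyY).mp hinf ystar hystarY
  have hpc' : (⟪y - py, ystar - py⟫ : ℝ) - (1/β) * ⟪gradient φ y, ystar - py⟫ ≤ 0 := by
    have he : u - py = (y - py) - (1/β) • gradient φ y := by rw [hu]; module
    rw [he, inner_sub_left, real_inner_smul_left] at hpc
    exact hpc
  have hnegs : ystar - py = -(py - ystar) := by abel
  rw [hnegs, inner_neg_right, inner_neg_right] at hpc'
  have h2 : (⟪gradient φ y, py - ystar⟫ : ℝ) ≤ β * ⟪y - py, py - ystar⟫ := by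
    have hstep : (1/β) * ⟪gradient φ y, py - ystar⟫ ≤ (⟪y - py, py - ystar⟫ : ℝ) := by
      linarith
    have := mul_le_mul_of_nonneg_left hstep hβ.le
    rwa [← mul_assoc, mul_one_div_cancel hβ.ne', one_mul] at this
  -- strong convexity at the minimizer
  have hsg := strong_grad_ineq hsc hdiff hpyY hystarY
  have h3 : μ/2 * ‖py - ystar‖^2 ≤ (⟪gradient φ py, py - ystar⟫ : ℝ) := by
    rw [hnegs, inner_neg_right, norm_neg] at hsg
    have := hmin py hpyY
    linarith
  -- Lipschitz bound
  have h4 : (⟪gradient φ py - gradient φ y, py - ystar⟫ : ℝ)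
      ≤ L * ‖y - py‖ * ‖py - ystar‖ := by
    calc (⟪gradient φ py - gradient φ y, py - ystar⟫ : ℝ)
        ≤ ‖gradient φ py - gradient φ y‖ * ‖py - ystar‖ := real_inner_le_norm _ _
      _ ≤ (L * ‖py - y‖) * ‖py - ystar‖ :=
          mul_le_mul_of_nonneg_right (hlip py y) (norm_nonneg _)
      _ = L * ‖y - py‖ * ‖py - ystar‖ := by rw [norm_sub_rev]
  have h5 : (⟪y - py, py - ystar⟫ : ℝ) ≤ ‖y - py‖ * ‖py - ystar‖ := real_inner_le_norm _ _
  have hsplit : (⟪gradient φ py, py - ystar⟫ : ℝ)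
      = ⟪gradient φ py - gradient φ y, py - ystar⟫ + ⟪gradient φ y, py - ystar⟫ := by
    rw [inner_sub_left]; ring
  -- key bound on distance of py to ystar
  have hD : μ * ‖py - ystar‖ ≤ 2 * (L + β) * ‖y - py‖ := by
    have hkey : μ/2 * ‖py - ystar‖^2 ≤ (L + β) * ‖y - py‖ * ‖py - ystar‖ := by
      have hb := mul_le_mul_of_nonneg_left h5 hβ.le
      nlinarith [h3, h4, h2, hsplit]
    rcases eq_or_lt_of_le (norm_nonneg (py - ystar)) with h0 | h0
    · rw [← h0, mul_zero]; positivity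
    · rw [sq] at hkey
      have := (mul_le_mul_iff_of_pos_right h0).mp (by nlinarith [hkey] :
        (μ/2 * ‖py - ystar‖) * ‖py - ystar‖ ≤ ((L + β) * ‖y - py‖) * ‖py - ystar‖)
      nlinarith [this]
  have htri : ‖y - ystar‖ ≤ ‖y - py‖ + ‖py - ystar‖ :=
    norm_sub_le_norm_sub_add_norm_sub y py ystar
  rw [div_mul_eq_mul_div, le_div_iff₀ (by positivity)]
  nlinarith [mul_le_mul_of_nonneg_left htri (by positivity : (0:ℝ) ≤ μ * β),
    mul_le_mul_of_nonneg_left hD hβ.le,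
    mul_nonneg (mul_nonneg hμ.le hL.le) (norm_nonneg (y - py)),
    norm_nonneg (y - py), norm_nonneg (py - ystar)]
end

section
/- Let L̃_k(x,y,λ) = L(x,y,λ) − (ρ_k/2)‖y‖², Ψ_k(x,λ) = max_{y∈Y} L̃_k(x,y,λ), and M_k(x,y,λ) = 2Ψ_k(x,λ) − L̃_k(x,y,λ), where {ρ_k} is nonnegative and monotonically decreasing and Y is convex compact with σ_y = max{‖y‖ : y ∈ Y}. Then for all (x,y,λ), M_{k+1}(x,y,λ) − M_k(x,y,λ) ≤ (ρ_k − ρ_{k+1}) σ_y². -/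
theorem stmt_12 (dx dy p : ℕ)
    (Y : Set (EuclideanSpace ℝ (Fin dy)))
    (hYne : Y.Nonempty) (hYcp : IsCompact Y) (hYcv : Convex ℝ Y)
    (Lag : EuclideanSpace ℝ (Fin dx) → EuclideanSpace ℝ (Fin dy) →
      EuclideanSpace ℝ (Fin p) → ℝ)
    (hLcont : ∀ x lam, Continuous (fun y => Lag x y lam))
    (ρ : ℕ → ℝ) (hρ0 : ∀ k, 0 ≤ ρ k) (hρmono : ∀ k, ρ (k+1) ≤ ρ k)
    (σy : ℝ) (hσy : ∀ y ∈ Y, ‖y‖ ≤ σy)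
    (Lt : ℕ → EuclideanSpace ℝ (Fin dx) → EuclideanSpace ℝ (Fin dy) →
      EuclideanSpace ℝ (Fin p) → ℝ)
    (hLt : ∀ k x y lam, Lt k x y lam = Lag x y lam - ρ k / 2 * ‖y‖^2)
    (Ψ : ℕ → EuclideanSpace ℝ (Fin dx) → EuclideanSpace ℝ (Fin p) → ℝ)
    (hΨ : ∀ k x lam, Ψ k x lam = sSup {z : ℝ | ∃ y ∈ Y, z = Lt k x y lam})
    (M : ℕ → EuclideanSpace ℝ (Fin dx) → EuclideanSpace ℝ (Fin dy) →
      EuclideanSpace ℝ (Fin p) → ℝ)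
    (hM : ∀ k x y lam, M k x y lam = 2 * Ψ k x lam - Lt k x y lam)
    (k : ℕ) (x : EuclideanSpace ℝ (Fin dx)) (lam : EuclideanSpace ℝ (Fin p)) :
    ∀ y ∈ Y, M (k+1) x y lam - M k x y lam ≤ (ρ k - ρ (k+1)) * σy^2 := by
  intro y hy
  set c : ℝ := (ρ k - ρ (k+1)) / 2 with hc
  have hc0 : 0 ≤ c := by
    have := hρmono k
    simp only [hc]; linarith
  have hσy0 : 0 ≤ σy := le_trans (norm_nonneg _) (hσy _ hYne.choose_spec)
  -- norms bound
  have hnorm : ∀ y' ∈ Y, ‖y'‖ ^ 2 ≤ σy ^ 2 := fun y' hy' =>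
    pow_le_pow_left₀ (norm_nonneg _) (hσy y' hy') 2
  -- Lt diff
  have hLtdiff : ∀ y' : EuclideanSpace ℝ (Fin dy),
      Lt (k+1) x y' lam = Lt k x y' lam + c * ‖y'‖ ^ 2 := by
    intro y'; rw [hLt, hLt, hc]; ring
  -- the sets
  have hsetk : {z : ℝ | ∃ y ∈ Y, z = Lt k x y lam} = (fun y => Lt k x y lam) '' Y := by
    ext z; constructor
    · rintro ⟨y', hy', rfl⟩; exact ⟨y', hy', rfl⟩
    · rintro ⟨y', hy', rfl⟩; exact ⟨y', hy', rfl⟩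
  have hcontk : Continuous (fun y' => Lt k x y' lam) := by
    have : (fun y' : EuclideanSpace ℝ (Fin dy) => Lt k x y' lam)
        = fun y' => Lag x y' lam - ρ k / 2 * ‖y'‖^2 := funext fun y' => hLt k x y' lam
    rw [this]
    exact (hLcont x lam).sub (continuous_const.mul ((continuous_norm).pow 2))
  have hbddk : BddAbove {z : ℝ | ∃ y ∈ Y, z = Lt k x y lam} := by
    rw [hsetk]; exact (hYcp.image hcontk).bddAbove
  have hnek : {z : ℝ | ∃ y ∈ Y, z = Lt k x y lam}.Nonempty :=
    ⟨_, hYne.choose, hYne.choose_spec, rfl⟩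
  have hne1 : {z : ℝ | ∃ y ∈ Y, z = Lt (k+1) x y lam}.Nonempty :=
    ⟨_, hYne.choose, hYne.choose_spec, rfl⟩
  -- Ψ bound
  have hΨle : Ψ (k+1) x lam ≤ Ψ k x lam + c * σy ^ 2 := by
    rw [hΨ, hΨ]
    apply csSup_le hne1
    rintro z ⟨y', hy', rfl⟩
    have h1 : Lt k x y' lam ≤ sSup {z : ℝ | ∃ y ∈ Y, z = Lt k x y lam} :=
      le_csSup hbddk ⟨y', hy', rfl⟩
    have h2 : c * ‖y'‖ ^ 2 ≤ c * σy ^ 2 := mul_le_mul_of_nonneg_left (hnorm y' hy') hc0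
    rw [hLtdiff]; linarith
  -- conclude
  have hM1 := hM (k+1) x y lam
  have hM2 := hM k x y lam
  have hd := hLtdiff y
  have hy2 : 0 ≤ c * ‖y‖ ^ 2 := mul_nonneg hc0 (sq_nonneg _)
  have : (ρ k - ρ (k+1)) * σy ^ 2 = 2 * (c * σy ^ 2) := by rw [hc]; ring
  rw [hM1, hM2, this]
  linarith
end

section
/- Let g : Y → ℝ be concave with L-Lipschitz gradient on convex compact Y and let g_ρ(y) = g(y) − (ρ/2)‖y‖². If y_ρ* = argmax_{y∈Y} g_ρ(y) and y_σ* = argmax_{y∈Y} g_σ(y) with 0 < σ ≤ ρ, then ‖y_σ* − y_ρ*‖² ≤ ((ρ − σ)/σ)(‖y_σ*‖² − ‖y_ρ*‖²). -/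
theorem stmt_13 (d : ℕ) (Y : Set (EuclideanSpace ℝ (Fin d)))
    (hYne : Y.Nonempty) (hYcp : IsCompact Y) (hYcv : Convex ℝ Y)
    (g : EuclideanSpace ℝ (Fin d) → ℝ) (L ρ σ : ℝ)
    (hσ : 0 < σ) (hσρ : σ ≤ ρ)
    (hconc : ConcaveOn ℝ Y g) (hdiff : Differentiable ℝ g)
    (hlip : ∀ u v, ‖gradient g u - gradient g v‖ ≤ L * ‖u - v‖)
    (yρ yσ : EuclideanSpace ℝ (Fin d)) (hyρY : yρ ∈ Y) (hyσY : yσ ∈ Y)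
    (hyρ : ∀ y ∈ Y, g y - ρ/2 * ‖y‖^2 ≤ g yρ - ρ/2 * ‖yρ‖^2)
    (hyσ : ∀ y ∈ Y, g y - σ/2 * ‖y‖^2 ≤ g yσ - σ/2 * ‖yσ‖^2) :
    ‖yσ - yρ‖^2 ≤ ((ρ - σ)/σ) * (‖yσ‖^2 - ‖yρ‖^2) := by
  set G : EuclideanSpace ℝ (Fin d) → ℝ := fun y => g y - σ/2 * ‖y‖^2 with hG
  have hSC : StrongConcaveOn Y σ G := by
    rw [strongConcaveOn_iff_convex]
    have : (fun x => G x + σ / 2 * ‖x‖ ^ 2) = g := by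
      funext x; simp [hG]
    rw [this]; exact hconc
  have key : σ/2 * ‖yσ - yρ‖^2 ≤ G yσ - G yρ := by
    set C := σ/2 * ‖yσ - yρ‖^2 with hC
    have h : ∀ t ∈ Set.Ioo (0:ℝ) 1, (1-t)*C ≤ G yσ - G yρ := by
      intro t ht
      have ha : (0:ℝ) ≤ t := ht.1.le
      have hb : (0:ℝ) ≤ 1 - t := by linarith [ht.2]
      have hab : t + (1 - t) = 1 := by ring
      have hcomb := hSC.2 hyρY hyσY ha hb hab
      have hmem : t • yρ + (1-t) • yσ ∈ Y := hYcv hyρY hyσY ha hb hab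
      have hopt := hyσ _ hmem
      rw [norm_sub_rev yρ yσ] at hcomb
      have hGc : G (t • yρ + (1-t) • yσ) ≤ G yσ := hopt
      simp only [smul_eq_mul] at hcomb
      rw [hC]
      have hmul : t * ((1-t) * (σ/2 * ‖yσ - yρ‖^2)) ≤ t * (G yσ - G yρ) := by
        simp only [hG] at hcomb hGc ⊢
        nlinarith [hcomb, hGc]
      exact le_of_mul_le_mul_left hmul ht.1
    have hne : (nhdsWithin (0:ℝ) (Set.Ioo 0 1)).NeBot := by
      apply mem_closure_iff_nhdsWithin_neBot.mp
      rw [closure_Ioo one_ne_zero.symm]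
      exact ⟨le_refl 0, zero_le_one⟩
    have ht : Filter.Tendsto (fun t : ℝ => (1-t)*C) (nhdsWithin 0 (Set.Ioo 0 1)) (nhds C) := by
      have hcont : Continuous (fun t : ℝ => (1-t)*C) :=
        (continuous_const.sub continuous_id).mul continuous_const
      have h2 := (hcont.tendsto 0).mono_left (nhdsWithin_le_nhds (s := Set.Ioo (0:ℝ) 1))
      simpa using h2
    exact le_of_tendsto ht (eventually_nhdsWithin_of_forall h)
  have hρσ := hyρ yσ hyσY
  have hGd : G yσ - G yρ ≤ (ρ-σ)/2 * (‖yσ‖^2 - ‖yρ‖^2) := by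
    simp only [hG]; linarith
  rw [div_mul_eq_mul_div, le_div_iff₀ hσ]
  nlinarith [key, hGd]
end

section
/- Let φ : Y → ℝ be μ-strongly concave with L-Lipschitz gradient on convex compact Y, y* = argmax φ, and consider the momentum-projected step ỹ⁺ = P_Y(y + β̃ w), y⁺ = y + η(ỹ⁺ − y) with 0 < η ≤ 1 and 0 < β̃ ≤ 1/(6L), where w satisfies ‖w − ĝ‖ is the estimator error and ĝ approximates ∇φ(y) with ‖ĝ − ∇φ(y)‖² ≤ d L²θ²/4. Then ‖y⁺ − y*‖² ≤ (1 − ηβ̃μ/2)‖y − y*‖² − (3η/4)‖ỹ⁺ − y‖² + (8ηβ̃/μ)‖ĝ − w‖² + 2ηβ̃ d L²θ²/(4μ)·4, i.e., ‖y⁺ − y*‖² ≤ (1 − ηβ̃μ/2)‖y − y*‖² − (3η/4)‖ỹ⁺ − y‖² + (8ηβ̃/μ)‖ĝ − w‖² + (2ηβ̃/μ) d L²θ². -/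
open Set Filter Topology InnerProductSpace

section Aux
variable {E : Type*} [NormedAddCommGroup E] [InnerProductSpace ℝ E] [CompleteSpace E]

lemma aux_dir (φ : E → ℝ) (hdiff : Differentiable ℝ φ) (x v : E) (t : ℝ) :
    HasDerivAt (fun s : ℝ => φ (x + s • v)) ⟪gradient φ (x + t • v), v⟫_ℝ t := by
  have h1 : HasDerivAt (fun s : ℝ => x + s • v) v t := by
    simpa using ((hasDerivAt_id t).smul_const v).const_add x
  have h2 := (hdiff (x + t • v)).hasGradientAt.hasFDerivAt
  have h3 := h2.comp_hasDerivAt t h1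
  simpa [InnerProductSpace.toDual_apply_apply, Function.comp_def] using h3

lemma aux_sc {Y : Set E} {μ : ℝ} {φ : E → ℝ} (hsc : StrongConcaveOn Y μ φ)
    (hdiff : Differentiable ℝ φ) {x z : E} (hx : x ∈ Y) (hz : z ∈ Y) :
    φ z - φ x + μ / 2 * ‖z - x‖ ^ 2 ≤ ⟪gradient φ x, z - x⟫_ℝ := by
  set v := z - x with hv
  have hF0 : HasDerivAt (fun s : ℝ => φ (x + s • v)) ⟪gradient φ x, v⟫_ℝ 0 := by
    have := aux_dir φ hdiff x v 0
    simpa using this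
  have hslope := hasDerivAt_iff_tendsto_slope.mp hF0
  have hslope' : Tendsto (slope (fun s : ℝ => φ (x + s • v)) 0) (𝓝[>] 0)
      (𝓝 ⟪gradient φ x, v⟫_ℝ) :=
    hslope.mono_left (nhdsWithin_mono 0 (fun t ht => by
      simpa using (ne_of_gt ht)))
  have hr : Tendsto (fun t : ℝ => φ z - φ x + (1 - t) * (μ / 2 * ‖v‖ ^ 2)) (𝓝[>] 0)
      (𝓝 (φ z - φ x + μ / 2 * ‖v‖ ^ 2)) := by
    have : Tendsto (fun t : ℝ => φ z - φ x + (1 - t) * (μ / 2 * ‖v‖ ^ 2)) (𝓝 0)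
        (𝓝 (φ z - φ x + (1 - 0) * (μ / 2 * ‖v‖ ^ 2))) := by
      exact Tendsto.const_add _ (((tendsto_const_nhds.sub tendsto_id).mul tendsto_const_nhds))
    simpa using this.mono_left nhdsWithin_le_nhds
  have hev : ∀ᶠ t in 𝓝[>] (0:ℝ),
      φ z - φ x + (1 - t) * (μ / 2 * ‖v‖ ^ 2) ≤ slope (fun s : ℝ => φ (x + s • v)) 0 t := by
    filter_upwards [Ioo_mem_nhdsGT_of_mem (by constructor <;> norm_num : (0:ℝ) ∈ Ico (0:ℝ) 1)]
      with t ht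
    have hcc := hsc.2 hz hx ht.1.le (by linarith [ht.2] : (0:ℝ) ≤ 1 - t) (by ring)
    have hpt : x + t • v = t • z + (1 - t) • x := by
      rw [hv]; module
    rw [slope_def_field]
    rw [le_div_iff₀ (by linarith [ht.1] : (0:ℝ) < t - 0)]
    simp only [zero_smul, add_zero, hpt]
    simp only [smul_eq_mul] at hcc
    nlinarith [hcc]
  have := le_of_tendsto_of_tendsto hr hslope' hev
  simpa using this

lemma aux_descent {φ : E → ℝ} {L : ℝ} (hdiff : Differentiable ℝ φ)
    (hlip : ∀ u v, ‖gradient φ u - gradient φ v‖ ≤ L * ‖u - v‖) (x u : E) :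
    φ x + ⟪gradient φ x, u⟫_ℝ ≤ φ (x + u) + L / 2 * ‖u‖ ^ 2 := by
  set c1 : ℝ := ⟪gradient φ x, u⟫_ℝ with hc1
  set c2 : ℝ := L / 2 * ‖u‖ ^ 2 with hc2
  set H : ℝ → ℝ := fun t => φ (x + t • u) - t * c1 + c2 * t ^ 2 with hH
  have hH' : ∀ t : ℝ, HasDerivAt H (⟪gradient φ (x + t • u), u⟫_ℝ - c1 + c2 * (2 * t)) t := by
    intro t
    have h := ((aux_dir φ hdiff x u t).sub ((hasDerivAt_id t).mul_const c1)).add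
      ((hasDerivAt_pow 2 t).const_mul c2)
    have he : ⟪gradient φ (x + t • u), u⟫_ℝ - 1 * c1 + c2 * (↑2 * t ^ (2 - 1))
        = ⟪gradient φ (x + t • u), u⟫_ℝ - c1 + c2 * (2 * t) := by push_cast; ring
    rw [← he]
    exact h
  have hmono : MonotoneOn H (Icc 0 1) := by
    apply monotoneOn_of_hasDerivWithinAt_nonneg (convex_Icc 0 1)
      (fun t _ => (hH' t).continuousAt.continuousWithinAt)
      (f' := fun t => ⟪gradient φ (x + t • u), u⟫_ℝ - c1 + c2 * (2 * t))
      (fun t _ => (hH' t).hasDerivWithinAt)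
    intro t ht
    rw [interior_Icc] at ht
    have hsub : ⟪gradient φ (x + t • u), u⟫_ℝ - c1
        = ⟪gradient φ (x + t • u) - gradient φ x, u⟫_ℝ := by
      rw [inner_sub_left]
    have habs : |⟪gradient φ (x + t • u) - gradient φ x, u⟫_ℝ|
        ≤ ‖gradient φ (x + t • u) - gradient φ x‖ * ‖u‖ := abs_real_inner_le_norm _ _
    have hlipt : ‖gradient φ (x + t • u) - gradient φ x‖ ≤ L * (t * ‖u‖) := by
      have := hlip (x + t • u) x
      simpa [norm_smul, abs_of_pos ht.1] using this
    have hmul := mul_le_mul_of_nonneg_right hlipt (norm_nonneg u)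
    have hlb := neg_abs_le ⟪gradient φ (x + t • u) - gradient φ x, u⟫_ℝ
    rw [hsub]
    have hc2t : c2 * (2 * t) = L * (t * ‖u‖) * ‖u‖ := by rw [hc2]; ring
    linarith [habs, hmul, hlb]
  have h01 := hmono (show (0:ℝ) ∈ Icc (0:ℝ) 1 by norm_num)
    (show (1:ℝ) ∈ Icc (0:ℝ) 1 by norm_num) zero_le_one
  have h0 : H 0 = φ x := by simp [hH]
  have h1 : H 1 = φ (x + u) - c1 + c2 := by simp [hH]
  rw [h0, h1] at h01
  linarith

lemma aux_vi {Y : Set E} (hYcv : Convex ℝ Y) {p q : E} (hq : q ∈ Y)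
    (hproj : ∀ z ∈ Y, ‖p - q‖ ≤ ‖p - z‖) {z : E} (hz : z ∈ Y) :
    ⟪p - q, z - q⟫_ℝ ≤ 0 := by
  haveI : Nonempty Y := ⟨⟨q, hq⟩⟩
  have hinf : ‖p - q‖ = ⨅ w : Y, ‖p - w‖ := by
    refine le_antisymm (le_ciInf fun w => hproj w w.2) ?_
    apply ciInf_le _ (⟨q, hq⟩ : Y)
    exact ⟨0, fun r ⟨w, hw⟩ => hw ▸ norm_nonneg _⟩
  exact (norm_eq_iInf_iff_real_inner_le_zero hYcv hq).mp hinf z hz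

end Aux

set_option maxHeartbeats 1000000 in
theorem stmt_14 (d : ℕ) (Y : Set (EuclideanSpace ℝ (Fin d)))
    (hYcv : Convex ℝ Y) (hYcp : IsCompact Y) (hYne : Y.Nonempty)
    (φ : EuclideanSpace ℝ (Fin d) → ℝ) (μ L θ βt η : ℝ)
    (hμ : 0 < μ) (hμL : μ ≤ L) (hL : 0 < L)
    (hη : 0 < η) (hη1 : η ≤ 1) (hβ : 0 < βt) (hβL : βt ≤ 1/(6*L))
    (hsc : StrongConcaveOn Y μ φ)
    (hdiff : Differentiable ℝ φ)
    (hlip : ∀ u v, ‖gradient φ u - gradient φ v‖ ≤ L * ‖u - v‖)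
    (ystar : EuclideanSpace ℝ (Fin d)) (hystarY : ystar ∈ Y)
    (hmax : ∀ y ∈ Y, φ y ≤ φ ystar)
    (y w ghat ytp : EuclideanSpace ℝ (Fin d)) (hy : y ∈ Y) (hytp : ytp ∈ Y)
    (hproj : ∀ z ∈ Y, ‖(y + βt • w) - ytp‖ ≤ ‖(y + βt • w) - z‖)
    (herr : ‖ghat - gradient φ y‖^2 ≤ d * L^2 * θ^2 / 4) :
    ‖(y + η • (ytp - y)) - ystar‖^2 ≤
      (1 - η * βt * μ / 2) * ‖y - ystar‖^2 - (3*η/4) * ‖ytp - y‖^2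
      + (8*η*βt/μ) * ‖ghat - w‖^2 + (2*η*βt/μ) * d * L^2 * θ^2 := by
  set g := gradient φ y with hg
  set A := ‖y - ystar‖^2 with hA
  set B := ‖ytp - y‖^2 with hB
  set nu := ‖ytp - ystar‖ with hnu
  set e1n := ‖ghat - w‖ with he1n
  set e2n := ‖ghat - g‖ with he2n
  set ip := ⟪ytp - y, y - ystar⟫_ℝ with hip
  set S := ⟪w, ytp - ystar⟫_ℝ with hS
  have hBnn : (0:ℝ) ≤ B := by positivity
  -- basic constants
  have hβL6 : βt * L ≤ 1/6 := by
    rw [le_div_iff₀ (by positivity : (0:ℝ) < 6*L)] at hβL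
    nlinarith
  have hβμ6 : βt * μ ≤ 1/6 := le_trans (by nlinarith : βt * μ ≤ βt * L) hβL6
  -- variational inequality
  have hvi : ⟪(y + βt • w) - ytp, ystar - ytp⟫_ℝ ≤ 0 := aux_vi hYcv hytp hproj hystarY
  have hvi' : ⟪ytp - y - βt • w, ytp - ystar⟫_ℝ ≤ 0 := by
    have h1 : ytp - y - βt • w = -((y + βt • w) - ytp) := by abel
    have h2 : ytp - ystar = -(ystar - ytp) := by abel
    rw [h1, h2, inner_neg_neg]
    exact hvi
  rw [inner_sub_left, real_inner_smul_left] at hvi'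
  have hinnerB : ⟪ytp - y, ytp - ystar⟫_ℝ = B + ip := by
    have hdec : ytp - ystar = (ytp - y) + (y - ystar) := by abel
    rw [hdec, inner_add_right, real_inner_self_eq_norm_sq]
  -- nu^2 expansion
  have hnu2 : nu^2 = B + 2*ip + A := by
    have hdec : ytp - ystar = (ytp - y) + (y - ystar) := by abel
    calc nu^2 = ‖(ytp - y) + (y - ystar)‖^2 := by rw [hnu, hdec]
      _ = B + 2*ip + A := by
          rw [norm_add_sq_real]
  -- decomposition of S
  have hSdec : S = ⟪w - ghat, ytp - ystar⟫_ℝ + ⟪ghat - g, ytp - ystar⟫_ℝ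
      + ⟪g, ytp - y⟫_ℝ + ⟪g, y - ystar⟫_ℝ := by
    have e1 := inner_sub_left (𝕜 := ℝ) w ghat (ytp - ystar)
    have e2 := inner_sub_left (𝕜 := ℝ) ghat g (ytp - ystar)
    have e3 : ⟪g, ytp - y⟫_ℝ + ⟪g, y - ystar⟫_ℝ = ⟪g, ytp - ystar⟫_ℝ := by
      rw [← inner_add_right]
      congr 1
      abel
    rw [hS]
    linarith [e1, e2, e3]
  -- bounds
  have hb1 : ⟪w - ghat, ytp - ystar⟫_ℝ ≤ e1n * nu := by
    calc ⟪w - ghat, ytp - ystar⟫_ℝ ≤ ‖w - ghat‖ * ‖ytp - ystar‖ := real_inner_le_norm _ _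
      _ = e1n * nu := by rw [norm_sub_rev]
  have hb2 : ⟪ghat - g, ytp - ystar⟫_ℝ ≤ e2n * nu := real_inner_le_norm _ _
  have hb3 : ⟪g, ytp - y⟫_ℝ ≤ φ ytp - φ y + L/2 * B := by
    have := aux_descent hdiff hlip y (ytp - y)
    rw [show y + (ytp - y) = ytp from by abel] at this
    rw [hg, hB]
    linarith
  have hb4 : ⟪g, y - ystar⟫_ℝ ≤ φ y - φ ystar - μ/2 * A := by
    have h := aux_sc hsc hdiff hy hystarY
    have hneg : ⟪g, y - ystar⟫_ℝ = -⟪g, ystar - y⟫_ℝ := by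
      rw [← inner_neg_right]
      congr 1
      abel
    rw [norm_sub_rev] at h
    rw [hneg, hg, hA]
    linarith
  have hb5 : φ ytp ≤ φ ystar := hmax ytp hytp
  have hSb : S ≤ e1n * nu + e2n * nu - μ/2 * A + L/2 * B := by
    rw [hSdec]; linarith
  -- nu^2 bound with S
  have hC : nu^2 ≤ A - B + 2*βt*S := by
    rw [hinnerB] at hvi'
    linarith [hnu2, hvi']
  have hmulS : 2*βt*S ≤ 2*βt*(e1n * nu + e2n * nu - μ/2 * A + L/2 * B) :=
    mul_le_mul_of_nonneg_left hSb (by positivity)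
  -- Young inequalities
  have hy1 : 2*βt*(e1n*nu) ≤ 8*βt/μ*e1n^2 + βt*μ/8*nu^2 := by
    have key : μ*(2*βt*(e1n*nu)) ≤ μ*(8*βt/μ*e1n^2 + βt*μ/8*nu^2) := by
      have h2 : μ*(8*βt/μ*e1n^2) = 8*βt*e1n^2 := by field_simp
      rw [mul_add, h2]
      have hint := mul_nonneg hβ.le (sq_nonneg (e1n - μ*nu/8))
      nlinarith [hint]
    exact le_of_mul_le_mul_left key hμ
  have hy2 : 2*βt*(e2n*nu) ≤ 8*βt/μ*e2n^2 + βt*μ/8*nu^2 := by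
    have key : μ*(2*βt*(e2n*nu)) ≤ μ*(8*βt/μ*e2n^2 + βt*μ/8*nu^2) := by
      have h2 : μ*(8*βt/μ*e2n^2) = 8*βt*e2n^2 := by field_simp
      rw [mul_add, h2]
      have hint := mul_nonneg hβ.le (sq_nonneg (e2n - μ*nu/8))
      nlinarith [hint]
    exact le_of_mul_le_mul_left key hμ
  -- triangle bound
  have htri : nu^2 ≤ 2*A + 2*B := by
    rw [hnu, hA, hB]
    have h := dist_triangle ytp y ystar
    rw [dist_eq_norm, dist_eq_norm, dist_eq_norm] at h
    have h2 := mul_self_le_mul_self (norm_nonneg (ytp - ystar)) h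
    nlinarith [h2, sq_nonneg (‖ytp - y‖ - ‖y - ystar‖)]
  have htriμ := mul_le_mul_of_nonneg_left htri (by positivity : (0:ℝ) ≤ βt*μ/4)
  -- key inequality
  have hkey : nu^2 ≤ (1 - βt*μ/2)*A + (βt*L + βt*μ/2 - 1)*B + 8*βt/μ*(e1n^2 + e2n^2) := by
    linarith [hC, hmulS, hy1, hy2, htriμ]
  -- final expansion
  have hfin : ‖(y + η • (ytp - y)) - ystar‖^2 = A + 2*η*ip + η^2*B := by
    have hid2 : (y + η • (ytp - y)) - ystar = (y - ystar) + η • (ytp - y) := by abel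
    rw [hid2, norm_add_sq_real, inner_smul_right, real_inner_comm, norm_smul,
      Real.norm_eq_abs, mul_pow, sq_abs]
    rw [hA, hB, hip]
    ring
  rw [hfin]
  have hkeyη := mul_le_mul_of_nonneg_left hkey hη.le
  have herrm : (8*η*βt/μ) * e2n^2 ≤ (8*η*βt/μ) * ((d:ℝ) * L^2 * θ^2 / 4) := by
    apply mul_le_mul_of_nonneg_left _ (by positivity)
    rw [he2n, hg]
    exact herr
  have hBc : 0 ≤ η*B*(1/4 - βt*L - βt*μ/2 + (1 - η)) := by
    apply mul_nonneg (mul_nonneg hη.le hBnn)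
    linarith
  have hnu2η : η * nu ^ 2 - η * (B + 2*ip + A) = 0 := by rw [hnu2]; ring
  have h1 := sub_nonneg.mpr hkeyη
  have h2 := sub_nonneg.mpr herrm
  have hident : ((1 - η * βt * μ / 2) * A - 3 * η / 4 * B + 8 * η * βt / μ * e1n ^ 2
        + 2 * η * βt / μ * ↑d * L ^ 2 * θ ^ 2)
      - (A + 2 * η * ip + η ^ 2 * B)
      = (η * ((1 - βt * μ / 2) * A + (βt * L + βt * μ / 2 - 1) * B
          + 8 * βt / μ * (e1n ^ 2 + e2n ^ 2)) - η * nu ^ 2)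
      + (8 * η * βt / μ * ((d:ℝ) * L ^ 2 * θ ^ 2 / 4) - 8 * η * βt / μ * e2n ^ 2)
      + (η * B * (1 / 4 - βt * L - βt * μ / 2 + (1 - η)))
      + (η * nu ^ 2 - η * (B + 2 * ip + A)) := by ring
  have hnn : 0 ≤ ((1 - η * βt * μ / 2) * A - 3 * η / 4 * B + 8 * η * βt / μ * e1n ^ 2
      + 2 * η * βt / μ * ↑d * L ^ 2 * θ ^ 2) - (A + 2 * η * ip + η ^ 2 * B) := by
    rw [hident, hnu2η]
    have := add_nonneg (add_nonneg h1 h2) hBc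
    linarith
  linarith [hnn]
end

section
/- Let v_{k+1} = ĝ_{k+1}(z_{k+1}) + (1−ϱ)(v_k − ĝ_k(z_k)) be a STORM-type variance-reduced estimator, where ĝ_k(z) is an unbiased mini-batch estimate (batch size b) of a deterministic quantity ḡ_k(z), each sample estimate has variance at most δ², and ‖g_{k+1}^{(ζ)}(z_{k+1}) − g_k^{(ζ)}(z_k)‖² ≤ Δ_k² almost surely for per-sample maps with bounded finite-difference bias ≤ ε_fd per evaluation. Then E‖ḡ_{k+1}(z_{k+1}) − v_{k+1}‖² ≤ (1−ϱ) E‖ḡ_k(z_k) − v_k‖² + (2/b)Δ_k² + 2ϱ²δ²/b. -/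
open MeasureTheory ProbabilityTheory

set_option maxHeartbeats 1000000

lemma sq_norm_eucl {d : ℕ} (x : EuclideanSpace ℝ (Fin d)) : ‖x‖^2 = ∑ i, (x i)^2 := by
  rw [EuclideanSpace.norm_eq, Real.sq_sqrt (by positivity)]
  simp [sq_abs]

lemma coord_sq_le {d : ℕ} (x : EuclideanSpace ℝ (Fin d)) (i : Fin d) : (x i)^2 ≤ ‖x‖^2 := by
  rw [sq_norm_eucl]
  exact Finset.single_le_sum (fun j _ => sq_nonneg (x j)) (Finset.mem_univ i)

/-- STORM-type variance-reduction recursion (single step). `G₁ j`, `G₂ j` are the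
per-sample zeroth-order estimates at the old and new iterates, `gbar₁`, `gbar₂`
the deterministic quantities they estimate, `vold` the previous momentum estimator,
and `vnew` the updated one built from the fresh mini-batch of size `b`. -/
theorem stmt_18 {Ω : Type*} [MeasurableSpace Ω] (μ : Measure Ω) [IsProbabilityMeasure μ]
    (d b : ℕ) (hb : 0 < b) (δ Δ ϱ : ℝ) (hδ : 0 ≤ δ) (hΔ : 0 ≤ Δ)
    (hϱ0 : 0 < ϱ) (hϱ1 : ϱ ≤ 1)
    (G₁ G₂ : Fin b → Ω → EuclideanSpace ℝ (Fin d))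
    (gbar₁ gbar₂ : EuclideanSpace ℝ (Fin d))
    (vold : Ω → EuclideanSpace ℝ (Fin d))
    (hmeas₁ : ∀ j, Measurable (G₁ j)) (hmeas₂ : ∀ j, Measurable (G₂ j))
    (hmeasv : Measurable vold)
    (hint₁ : ∀ j, Integrable (G₁ j) μ) (hint₂ : ∀ j, Integrable (G₂ j) μ)
    (hintv2 : Integrable (fun ω => ‖gbar₁ - vold ω‖^2) μ)
    (hint2₂ : ∀ j, Integrable (fun ω => ‖G₂ j ω - gbar₂‖^2) μ)
    -- conditional (here: full) unbiasedness of the per-sample estimates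
    (hunb₁ : ∀ j, ∫ ω, G₁ j ω ∂μ = gbar₁)
    (hunb₂ : ∀ j, ∫ ω, G₂ j ω ∂μ = gbar₂)
    -- per-sample variance bound
    (hvar : ∀ j, ∫ ω, ‖G₂ j ω - gbar₂‖^2 ∂μ ≤ δ^2)
    -- almost-sure bound on the per-sample drift between consecutive iterates
    (hdrift : ∀ j, ∀ᵐ ω ∂μ, ‖G₂ j ω - G₁ j ω‖^2 ≤ Δ^2)
    -- the per-sample pairs are jointly independent across the batch
    (hiid : iIndepFun
      (fun j => fun ω => (G₁ j ω, G₂ j ω)) μ)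
    -- the fresh batch is independent of the previous estimator
    (hindep : IndepFun vold (fun ω => fun j : Fin b => (G₁ j ω, G₂ j ω)) μ)
    (vnew : Ω → EuclideanSpace ℝ (Fin d))
    (hvnew : ∀ ω, vnew ω
      = (1/(b:ℝ)) • ∑ j, G₂ j ω
        + (1 - ϱ) • (vold ω - (1/(b:ℝ)) • ∑ j, G₁ j ω)) :
    ∫ ω, ‖gbar₂ - vnew ω‖^2 ∂μ
      ≤ (1 - ϱ) * ∫ ω, ‖gbar₁ - vold ω‖^2 ∂μ + (2/(b:ℝ)) * Δ^2 + 2 * ϱ^2 * δ^2 / b := by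
  have hb' : (b:ℝ) ≠ 0 := Nat.cast_ne_zero.mpr hb.ne'
  have hbpos : (0:ℝ) < b := Nat.cast_pos.mpr hb
  set m : EuclideanSpace ℝ (Fin d) := gbar₂ - gbar₁ with hm
  set W : Fin b → Ω → EuclideanSpace ℝ (Fin d) := fun j ω => G₂ j ω - G₁ j ω with hWdef
  set Y : Fin b → Ω → EuclideanSpace ℝ (Fin d) :=
    fun j ω => ϱ • (gbar₂ - G₂ j ω) + (1 - ϱ) • (m - W j ω) with hYdef
  -- basic integrability
  have intW : ∀ j, Integrable (W j) μ := fun j => (hint₂ j).sub (hint₁ j)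
  have intG2c : ∀ j, Integrable (fun ω => gbar₂ - G₂ j ω) μ :=
    fun j => (integrable_const _).sub (hint₂ j)
  have intY : ∀ j, Integrable (Y j) μ :=
    fun j => ((intG2c j).smul ϱ).add (((integrable_const m).sub (intW j)).smul (1 - ϱ))
  -- measurability
  have measW : ∀ j, Measurable (W j) := fun j => (hmeas₂ j).sub (hmeas₁ j)
  have measY : ∀ j, Measurable (Y j) := fun j =>
    ((measurable_const.sub (hmeas₂ j)).const_smul ϱ).add
      ((measurable_const.sub (measW j)).const_smul (1 - ϱ))
  -- means
  have hWmean : ∀ j, ∫ ω, W j ω ∂μ = m := by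
    intro j
    rw [hWdef]
    rw [integral_sub (hint₂ j) (hint₁ j), hunb₂ j, hunb₁ j]
  have hYmean : ∀ j, ∫ ω, Y j ω ∂μ = 0 := by
    intro j
    have e1 : Integrable (fun ω => ϱ • (gbar₂ - G₂ j ω)) μ := (intG2c j).smul ϱ
    have e2 : Integrable (fun ω => (1 - ϱ) • (m - W j ω)) μ :=
      ((integrable_const m).sub (intW j)).smul (1 - ϱ)
    have hY' : ∫ ω, Y j ω ∂μ
        = ∫ ω, (ϱ • (gbar₂ - G₂ j ω) + (1 - ϱ) • (m - W j ω)) ∂μ := rfl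
    rw [hY', integral_add e1 e2, integral_smul, integral_smul,
      integral_sub (integrable_const _) (hint₂ j),
      integral_sub (integrable_const _) (intW j),
      hunb₂ j, hWmean j, integral_const, integral_const]
    simp
  -- second moments of W
  have intW2 : ∀ j, Integrable (fun ω => ‖W j ω‖^2) μ := by
    intro j
    refine Integrable.mono' (integrable_const (Δ^2)) ((measW j).norm.pow_const 2).aestronglyMeasurable ?_
    filter_upwards [hdrift j] with ω hω
    rw [Real.norm_eq_abs, abs_of_nonneg (by positivity)]
    exact hω
  have hW2 : ∀ j, ∫ ω, ‖W j ω‖^2 ∂μ ≤ Δ^2 := by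
    intro j
    calc ∫ ω, ‖W j ω‖^2 ∂μ ≤ ∫ _, Δ^2 ∂μ :=
          integral_mono_ae (intW2 j) (integrable_const _) (hdrift j)
      _ = Δ^2 := by simp
  have intWm2 : ∀ j, Integrable (fun ω => ‖m - W j ω‖^2) μ := by
    intro j
    have heq : (fun ω => ‖m - W j ω‖^2)
        = fun ω => ‖m‖^2 - 2 * (inner ℝ m (W j ω) : ℝ) + ‖W j ω‖^2 :=
      funext fun ω => norm_sub_sq_real m (W j ω)
    rw [heq]
    have i2 : Integrable (fun ω => 2 * (inner ℝ m (W j ω) : ℝ)) μ :=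
      ((intW j).const_inner m).const_mul 2
    have i3 : Integrable (fun ω => ‖m‖^2 - 2 * (inner ℝ m (W j ω) : ℝ)) μ :=
      (integrable_const _).sub i2
    exact i3.add (intW2 j)
  have hWm2 : ∀ j, ∫ ω, ‖m - W j ω‖^2 ∂μ ≤ Δ^2 := by
    intro j
    have heq : (fun ω => ‖m - W j ω‖^2)
        = fun ω => ‖m‖^2 - 2 * (inner ℝ m (W j ω) : ℝ) + ‖W j ω‖^2 :=
      funext fun ω => norm_sub_sq_real m (W j ω)
    have i2 : Integrable (fun ω => 2 * (inner ℝ m (W j ω) : ℝ)) μ :=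
      ((intW j).const_inner m).const_mul 2
    have i3 : Integrable (fun ω => ‖m‖^2 - 2 * (inner ℝ m (W j ω) : ℝ)) μ :=
      (integrable_const _).sub i2
    rw [heq, integral_add i3 (intW2 j),
      integral_sub (integrable_const _) i2,
      integral_const_mul, integral_inner (intW j) m, hWmean j, real_inner_self_eq_norm_sq,
      integral_const]
    have h1 := hW2 j
    have h2 := sq_nonneg ‖m‖
    simp only [probReal_univ, measure_univ, ENNReal.toReal_one, smul_eq_mul, one_mul]
    nlinarith
  -- second moments of Y
  have hϱ1' : 0 ≤ 1 - ϱ := by linarith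
  have hYptwise : ∀ j ω, ‖Y j ω‖^2
      ≤ 2*ϱ^2*‖G₂ j ω - gbar₂‖^2 + 2*(1-ϱ)^2*‖m - W j ω‖^2 := by
    intro j ω
    have h1 : ‖Y j ω‖ ≤ ϱ*‖gbar₂ - G₂ j ω‖ + (1-ϱ)*‖m - W j ω‖ := by
      refine (norm_add_le _ _).trans ?_
      rw [norm_smul, norm_smul, Real.norm_eq_abs, Real.norm_eq_abs,
        abs_of_pos hϱ0, abs_of_nonneg hϱ1']
    have h2 : ‖gbar₂ - G₂ j ω‖ = ‖G₂ j ω - gbar₂‖ := norm_sub_rev _ _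
    rw [h2] at h1
    have h0 : (0:ℝ) ≤ ‖Y j ω‖ := norm_nonneg _
    nlinarith [norm_nonneg (G₂ j ω - gbar₂), norm_nonneg (m - W j ω),
      sq_nonneg (ϱ*‖G₂ j ω - gbar₂‖ - (1-ϱ)*‖m - W j ω‖)]
  have intYbnd : ∀ j, Integrable
      (fun ω => 2*ϱ^2*‖G₂ j ω - gbar₂‖^2 + 2*(1-ϱ)^2*‖m - W j ω‖^2) μ :=
    fun j => ((hint2₂ j).const_mul _).add ((intWm2 j).const_mul _)
  have intY2 : ∀ j, Integrable (fun ω => ‖Y j ω‖^2) μ := by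
    intro j
    refine Integrable.mono' (intYbnd j) ((measY j).norm.pow_const 2).aestronglyMeasurable ?_
    refine ae_of_all μ fun ω => ?_
    rw [Real.norm_eq_abs, abs_of_nonneg (by positivity)]
    exact hYptwise j ω
  have hY2 : ∀ j, ∫ ω, ‖Y j ω‖^2 ∂μ ≤ 2*ϱ^2*δ^2 + 2*Δ^2 := by
    intro j
    calc ∫ ω, ‖Y j ω‖^2 ∂μ
        ≤ ∫ ω, (2*ϱ^2*‖G₂ j ω - gbar₂‖^2 + 2*(1-ϱ)^2*‖m - W j ω‖^2) ∂μ :=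
          integral_mono (intY2 j) (intYbnd j) (fun ω => hYptwise j ω)
      _ = 2*ϱ^2 * ∫ ω, ‖G₂ j ω - gbar₂‖^2 ∂μ + 2*(1-ϱ)^2 * ∫ ω, ‖m - W j ω‖^2 ∂μ := by
          rw [integral_add ((hint2₂ j).const_mul _) ((intWm2 j).const_mul _),
            integral_const_mul, integral_const_mul]
      _ ≤ 2*ϱ^2*δ^2 + 2*Δ^2 := by
          have h1 := hvar j
          have h2 := hWm2 j
          have h3 : (1-ϱ)^2 ≤ 1 := by nlinarith
          have h4 : 0 ≤ ∫ ω, ‖m - W j ω‖^2 ∂μ := integral_nonneg fun ω => by positivity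
          nlinarith [sq_nonneg ϱ]
  -- coordinate helpers
  have intYc1 : ∀ j i, Integrable (fun ω => Y j ω i) μ := fun j i =>
    (EuclideanSpace.proj (𝕜 := ℝ) i).integrable_comp (intY j)
  have hYmeanc : ∀ j i, ∫ ω, Y j ω i ∂μ = 0 := by
    intro j i
    have h := (EuclideanSpace.proj (𝕜 := ℝ) i).integral_comp_comm (intY j)
    rw [hYmean j] at h
    simpa using h
  have measYc : ∀ j i, Measurable (fun ω => Y j ω i) := fun j i =>
    (EuclideanSpace.proj (𝕜 := ℝ) i).measurable.comp (measY j)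
  have intYc2 : ∀ j i, Integrable (fun ω => (Y j ω i)^2) μ := by
    intro j i
    refine Integrable.mono' (intY2 j) ((measYc j i).pow_const 2).aestronglyMeasurable ?_
    refine ae_of_all μ fun ω => ?_
    rw [Real.norm_eq_abs, abs_of_nonneg (sq_nonneg _)]
    exact coord_sq_le (Y j ω) i
  -- old error coordinates
  have measA : ∀ i, Measurable (fun ω => (gbar₁ - vold ω) i) := fun i =>
    (EuclideanSpace.proj (𝕜 := ℝ) i).measurable.comp (measurable_const.sub hmeasv)
  have intA2 : ∀ i, Integrable (fun ω => ((gbar₁ - vold ω) i)^2) μ := by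
    intro i
    refine Integrable.mono' hintv2 ((measA i).pow_const 2).aestronglyMeasurable ?_
    refine ae_of_all μ fun ω => ?_
    rw [Real.norm_eq_abs, abs_of_nonneg (sq_nonneg _)]
    exact coord_sq_le (gbar₁ - vold ω) i
  have intA1 : ∀ i, Integrable (fun ω => (gbar₁ - vold ω) i) μ := by
    intro i
    refine Integrable.mono' ((integrable_const 1).add hintv2) (measA i).aestronglyMeasurable ?_
    refine ae_of_all μ fun ω => ?_
    have h1 : |(gbar₁ - vold ω) i| ≤ ‖gbar₁ - vold ω‖ := by
      have := coord_sq_le (gbar₁ - vold ω) i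
      nlinarith [abs_nonneg ((gbar₁ - vold ω) i), norm_nonneg (gbar₁ - vold ω),
        sq_abs ((gbar₁ - vold ω) i)]
    have h2 : ‖gbar₁ - vold ω‖ ≤ 1 + ‖gbar₁ - vold ω‖^2 := by
      nlinarith [sq_nonneg (‖gbar₁ - vold ω‖ - 1)]
    calc ‖(gbar₁ - vold ω) i‖ = |(gbar₁ - vold ω) i| := rfl
      _ ≤ 1 + ‖gbar₁ - vold ω‖^2 := by linarith
  -- independence: coordinate maps of Y as functions of the pair
  have measφ : ∀ (i : Fin d), Measurable (fun p : EuclideanSpace ℝ (Fin d) × EuclideanSpace ℝ (Fin d) =>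
      (ϱ • (gbar₂ - p.2) + (1 - ϱ) • (m - (p.2 - p.1))) i) := by
    intro i
    exact (EuclideanSpace.proj (𝕜 := ℝ) i).measurable.comp
      (((measurable_const.sub measurable_snd).const_smul ϱ).add
        ((measurable_const.sub (measurable_snd.sub measurable_fst)).const_smul (1 - ϱ)))
  have hYYindep : ∀ (i : Fin d) (j l : Fin b), j ≠ l →
      IndepFun (fun ω => Y j ω i) (fun ω => Y l ω i) μ := by
    intro i j l hjl
    exact (hiid.indepFun hjl).comp (measφ i) (measφ i)
  have hAYindep : ∀ (i : Fin d) (j : Fin b),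
      IndepFun (fun ω => (gbar₁ - vold ω) i) (fun ω => Y j ω i) μ := by
    intro i j
    have hf : Measurable (fun x : EuclideanSpace ℝ (Fin d) => (gbar₁ - x) i) :=
      (EuclideanSpace.proj (𝕜 := ℝ) i).measurable.comp (measurable_const.sub measurable_id)
    have hg : Measurable (fun t : Fin b → EuclideanSpace ℝ (Fin d) × EuclideanSpace ℝ (Fin d) =>
        (ϱ • (gbar₂ - (t j).2) + (1 - ϱ) • (m - ((t j).2 - (t j).1))) i) :=
      (measφ i).comp (measurable_pi_apply j)
    exact hindep.comp hf hg
  -- cross-term integrals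
  have intAY : ∀ (i : Fin d) (j : Fin b),
      Integrable (fun ω => (gbar₁ - vold ω) i * Y j ω i) μ := fun i j =>
    (hAYindep i j).integrable_mul (intA1 i) (intYc1 j i)
  have hcross1 : ∀ (i : Fin d) (j : Fin b),
      ∫ ω, (gbar₁ - vold ω) i * Y j ω i ∂μ = 0 := by
    intro i j
    have h := (hAYindep i j).integral_fun_mul_eq_mul_integral (intA1 i).aestronglyMeasurable
      (intYc1 j i).aestronglyMeasurable
    calc ∫ ω, (gbar₁ - vold ω) i * Y j ω i ∂μ
        = (∫ ω, (gbar₁ - vold ω) i ∂μ) * ∫ ω, Y j ω i ∂μ := h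
      _ = 0 := by rw [hYmeanc j i, mul_zero]
  have intYY : ∀ (i : Fin d) (j l : Fin b),
      Integrable (fun ω => Y j ω i * Y l ω i) μ := by
    intro i j l
    by_cases hjl : j = l
    · subst hjl
      have : (fun ω => Y j ω i * Y j ω i) = fun ω => (Y j ω i)^2 := by
        funext ω; ring
      rw [this]; exact intYc2 j i
    · exact (hYYindep i j l hjl).integrable_mul (intYc1 j i) (intYc1 l i)
  have hcross2 : ∀ (i : Fin d) (j l : Fin b), j ≠ l →
      ∫ ω, Y j ω i * Y l ω i ∂μ = 0 := by
    intro i j l hjl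
    have h := (hYYindep i j l hjl).integral_fun_mul_eq_mul_integral (intYc1 j i).aestronglyMeasurable
      (intYc1 l i).aestronglyMeasurable
    calc ∫ ω, Y j ω i * Y l ω i ∂μ
        = (∫ ω, Y j ω i ∂μ) * ∫ ω, Y l ω i ∂μ := h
      _ = 0 := by rw [hYmeanc j i, zero_mul]
  -- pointwise coordinate decomposition of the new error
  have hdecomp : ∀ ω (i : Fin d), (gbar₂ - vnew ω) i
      = (1-ϱ) * (gbar₁ - vold ω) i + (1/(b:ℝ)) * ∑ j, Y j ω i := by
    intro ω i
    have hs1 : (∑ j, G₂ j ω) i = ∑ j, G₂ j ω i := by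
      rw [WithLp.ofLp_sum, Finset.sum_apply]
    have hs2 : (∑ j, G₁ j ω) i = ∑ j, G₁ j ω i := by
      rw [WithLp.ofLp_sum, Finset.sum_apply]
    have hsY : ∀ j : Fin b, Y j ω i = ϱ * (gbar₂ i - G₂ j ω i)
        + (1-ϱ) * ((gbar₂ i - gbar₁ i) - (G₂ j ω i - G₁ j ω i)) := by
      intro j
      show (ϱ • (gbar₂ - G₂ j ω) + (1 - ϱ) • ((gbar₂ - gbar₁) - (G₂ j ω - G₁ j ω))) i = _
      simp [PiLp.add_apply, PiLp.smul_apply, PiLp.sub_apply, smul_eq_mul]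
    rw [hvnew ω]
    simp only [PiLp.sub_apply, PiLp.add_apply, PiLp.smul_apply, smul_eq_mul, hs1, hs2]
    rw [Finset.sum_congr rfl fun j _ => hsY j]
    have e1 : ∑ j : Fin b, (ϱ * (gbar₂ i - G₂ j ω i)
        + (1-ϱ) * ((gbar₂ i - gbar₁ i) - (G₂ j ω i - G₁ j ω i)))
        = ϱ * ((b:ℝ) * gbar₂ i - ∑ j, G₂ j ω i)
          + (1-ϱ) * ((b:ℝ) * (gbar₂ i - gbar₁ i) - (∑ j, G₂ j ω i - ∑ j, G₁ j ω i)) := by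
      rw [Finset.sum_add_distrib, ← Finset.mul_sum, ← Finset.mul_sum,
        Finset.sum_sub_distrib, Finset.sum_sub_distrib, Finset.sum_sub_distrib,
        Finset.sum_const, Finset.sum_const, Finset.card_fin, nsmul_eq_mul, nsmul_eq_mul,
        Finset.sum_sub_distrib]
      ring
    rw [e1]
    field_simp
    ring
  -- main per-coordinate identity
  have key : ∀ i : Fin d, ∫ ω, ((gbar₂ - vnew ω) i)^2 ∂μ
      = (1-ϱ)^2 * ∫ ω, ((gbar₁ - vold ω) i)^2 ∂μ
        + (1/(b:ℝ))^2 * ∑ j, ∫ ω, (Y j ω i)^2 ∂μ := by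
    intro i
    have hexp : ∀ ω, ((gbar₂ - vnew ω) i)^2
        = (1-ϱ)^2 * ((gbar₁ - vold ω) i)^2
          + (2*(1-ϱ)*(1/(b:ℝ))) * ∑ j, (gbar₁ - vold ω) i * Y j ω i
          + (1/(b:ℝ))^2 * ∑ j, ∑ l, Y j ω i * Y l ω i := by
      intro ω
      rw [hdecomp ω i]
      rw [← Finset.mul_sum, ← Finset.sum_mul_sum]
      ring
    have int1 : Integrable (fun ω => (1-ϱ)^2 * ((gbar₁ - vold ω) i)^2) μ :=
      (intA2 i).const_mul _
    have int2 : Integrable (fun ω =>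
        (2*(1-ϱ)*(1/(b:ℝ))) * ∑ j, (gbar₁ - vold ω) i * Y j ω i) μ :=
      (integrable_finset_sum _ fun j _ => intAY i j).const_mul _
    have int3 : Integrable (fun ω =>
        (1/(b:ℝ))^2 * ∑ j, ∑ l, Y j ω i * Y l ω i) μ :=
      (integrable_finset_sum _ fun j _ => integrable_finset_sum _ fun l _ => intYY i j l).const_mul _
    calc ∫ ω, ((gbar₂ - vnew ω) i)^2 ∂μ
        = ∫ ω, ((1-ϱ)^2 * ((gbar₁ - vold ω) i)^2
            + (2*(1-ϱ)*(1/(b:ℝ))) * ∑ j, (gbar₁ - vold ω) i * Y j ω i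
            + (1/(b:ℝ))^2 * ∑ j, ∑ l, Y j ω i * Y l ω i) ∂μ := by
          exact integral_congr_ae (ae_of_all μ fun ω => hexp ω)
      _ = (1-ϱ)^2 * ∫ ω, ((gbar₁ - vold ω) i)^2 ∂μ
            + (2*(1-ϱ)*(1/(b:ℝ))) * ∑ j, ∫ ω, (gbar₁ - vold ω) i * Y j ω i ∂μ
            + (1/(b:ℝ))^2 * ∑ j, ∑ l, ∫ ω, Y j ω i * Y l ω i ∂μ := by
          have hswap : ∑ j : Fin b, ∫ ω, (∑ l, Y j ω i * Y l ω i) ∂μ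
              = ∑ j : Fin b, ∑ l : Fin b, ∫ ω, Y j ω i * Y l ω i ∂μ :=
            Finset.sum_congr rfl fun j _ =>
              integral_finset_sum _ fun l _ => intYY i j l
          have int12 : Integrable (fun ω => (1-ϱ)^2 * ((gbar₁ - vold ω) i)^2
              + (2*(1-ϱ)*(1/(b:ℝ))) * ∑ j, (gbar₁ - vold ω) i * Y j ω i) μ :=
            int1.add int2
          rw [integral_add int12 int3, integral_add int1 int2,
            integral_const_mul, integral_const_mul, integral_const_mul,
            integral_finset_sum _ fun j _ => intAY i j,
            integral_finset_sum _ fun j _ => integrable_finset_sum _ fun l _ => intYY i j l,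
            hswap]
      _ = (1-ϱ)^2 * ∫ ω, ((gbar₁ - vold ω) i)^2 ∂μ
            + (1/(b:ℝ))^2 * ∑ j, ∫ ω, (Y j ω i)^2 ∂μ := by
          have hz : ∑ j, ∫ ω, (gbar₁ - vold ω) i * Y j ω i ∂μ = 0 :=
            Finset.sum_eq_zero fun j _ => hcross1 i j
          have hdiag : ∀ j : Fin b, ∑ l, ∫ ω, Y j ω i * Y l ω i ∂μ
              = ∫ ω, (Y j ω i)^2 ∂μ := by
            intro j
            rw [Finset.sum_eq_single j (fun l _ hlj => hcross2 i j l (Ne.symm hlj))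
              (fun h => absurd (Finset.mem_univ j) h)]
            congr 1
            funext ω
            ring
          rw [hz, mul_zero, add_zero]
          congr 1
          rw [Finset.sum_congr rfl fun j _ => hdiag j]
  -- assemble
  have intC2 : ∀ i : Fin d, Integrable (fun ω => ((gbar₂ - vnew ω) i)^2) μ := by
    intro i
    have hexp : (fun ω => ((gbar₂ - vnew ω) i)^2)
        = fun ω => ((1-ϱ) * (gbar₁ - vold ω) i + (1/(b:ℝ)) * ∑ j, Y j ω i)^2 := by
      funext ω; rw [hdecomp ω i]
    rw [hexp]
    have hexp2 : (fun ω => ((1-ϱ) * (gbar₁ - vold ω) i + (1/(b:ℝ)) * ∑ j, Y j ω i)^2)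
        = fun ω => (1-ϱ)^2 * ((gbar₁ - vold ω) i)^2
          + (2*(1-ϱ)*(1/(b:ℝ))) * ∑ j, (gbar₁ - vold ω) i * Y j ω i
          + (1/(b:ℝ))^2 * ∑ j, ∑ l, Y j ω i * Y l ω i := by
      funext ω
      rw [← Finset.mul_sum, ← Finset.sum_mul_sum]
      ring
    rw [hexp2]
    exact (((intA2 i).const_mul _).add
      ((integrable_finset_sum _ fun j _ => intAY i j).const_mul _)).add
      ((integrable_finset_sum _ fun j _ =>
        integrable_finset_sum _ fun l _ => intYY i j l).const_mul _)
  have hLHS : ∫ ω, ‖gbar₂ - vnew ω‖^2 ∂μ = ∑ i, ∫ ω, ((gbar₂ - vnew ω) i)^2 ∂μ := by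
    rw [← integral_finset_sum _ fun i _ => intC2 i]
    exact integral_congr_ae (ae_of_all μ fun ω => sq_norm_eucl _)
  have hold : ∫ ω, ‖gbar₁ - vold ω‖^2 ∂μ = ∑ i, ∫ ω, ((gbar₁ - vold ω) i)^2 ∂μ := by
    rw [← integral_finset_sum _ fun i _ => intA2 i]
    exact integral_congr_ae (ae_of_all μ fun ω => sq_norm_eucl _)
  have hYsum : ∀ j, ∫ ω, ‖Y j ω‖^2 ∂μ = ∑ i, ∫ ω, (Y j ω i)^2 ∂μ := by
    intro j
    rw [← integral_finset_sum _ fun i _ => intYc2 j i]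
    exact integral_congr_ae (ae_of_all μ fun ω => sq_norm_eucl _)
  have hmain : ∫ ω, ‖gbar₂ - vnew ω‖^2 ∂μ
      = (1-ϱ)^2 * ∫ ω, ‖gbar₁ - vold ω‖^2 ∂μ + (1/(b:ℝ))^2 * ∑ j, ∫ ω, ‖Y j ω‖^2 ∂μ := by
    rw [hLHS, hold]
    rw [Finset.sum_congr rfl fun i _ => key i, Finset.sum_add_distrib,
      ← Finset.mul_sum, ← Finset.mul_sum]
    congr 1
    rw [Finset.sum_comm]
    congr 1
    exact Finset.sum_congr rfl fun j _ => (hYsum j).symm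
  -- final estimate
  have hsumY : ∑ j, ∫ ω, ‖Y j ω‖^2 ∂μ ≤ (b:ℝ) * (2*ϱ^2*δ^2 + 2*Δ^2) := by
    calc ∑ j, ∫ ω, ‖Y j ω‖^2 ∂μ ≤ ∑ _j : Fin b, (2*ϱ^2*δ^2 + 2*Δ^2) :=
          Finset.sum_le_sum fun j _ => hY2 j
      _ = (b:ℝ) * (2*ϱ^2*δ^2 + 2*Δ^2) := by
          rw [Finset.sum_const, Finset.card_fin]; ring
  have hVnn : 0 ≤ ∫ ω, ‖gbar₁ - vold ω‖^2 ∂μ := integral_nonneg fun ω => sq_nonneg _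
  have hsq : (1-ϱ)^2 ≤ 1-ϱ := by nlinarith
  rw [hmain]
  have h1 : (1-ϱ)^2 * ∫ ω, ‖gbar₁ - vold ω‖^2 ∂μ ≤ (1-ϱ) * ∫ ω, ‖gbar₁ - vold ω‖^2 ∂μ :=
    mul_le_mul_of_nonneg_right hsq hVnn
  have h2 : (1/(b:ℝ))^2 * ∑ j, ∫ ω, ‖Y j ω‖^2 ∂μ
      ≤ (2/(b:ℝ)) * Δ^2 + 2 * ϱ^2 * δ^2 / b := by
    have h3 : (1/(b:ℝ))^2 * ((b:ℝ) * (2*ϱ^2*δ^2 + 2*Δ^2))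
        = (2/(b:ℝ)) * Δ^2 + 2 * ϱ^2 * δ^2 / b := by
      field_simp
      ring
    calc (1/(b:ℝ))^2 * ∑ j, ∫ ω, ‖Y j ω‖^2 ∂μ
        ≤ (1/(b:ℝ))^2 * ((b:ℝ) * (2*ϱ^2*δ^2 + 2*Δ^2)) :=
          mul_le_mul_of_nonneg_left hsumY (by positivity)
      _ = (2/(b:ℝ)) * Δ^2 + 2 * ϱ^2 * δ^2 / b := h3
  linarith
end
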